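/- arXiv:1506.02812 — 12 statements merged into one kernel-verified Lean document; each statement's English description precedes it below -/
import Mathlib

section
/- For two central soft sets (f, A) and (g, B) over a common universe U, the central soft information order (f, A) ⊑ (g, B) holds if and only if A ⊆ B and, for every parameter e ∈ E with e ∉ B − A, one has f(e) ⊆ g(e). -/
open Classical

/-- A central soft set over a universe `U` with parameter set `E`:
a mapping `f : E → Set U` together with a central set `A ⊆ E`. -/
structure CSS (E U : Type*) where
  f : E → Set U
  A : Set E

/-- Union of central soft sets. -/
noncomputable def cssUnion {E U : Type*} (s t : CSS E U) : CSS E U where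
  f := fun e =>
    if e ∈ s.A \ t.A then s.f e
    else if e ∈ t.A \ s.A then t.f e
    else s.f e ∪ t.f e
  A := s.A ∪ t.A

/-- Intersection of central soft sets. -/
noncomputable def cssInter {E U : Type*} (s t : CSS E U) : CSS E U where
  f := fun e =>
    if e ∈ s.A \ t.A then t.f e
    else if e ∈ t.A \ s.A then s.f e
    else s.f e ∩ t.f e
  A := s.A ∩ t.A

/-- Complement of a central soft set. -/
def cssCompl {E U : Type*} (s : CSS E U) : CSS E U where
  f := fun e => (s.f e)ᶜ
  A := s.Aᶜ

/-- Difference of central soft sets: `s − t = s ⊓ tᶜ`. -/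
noncomputable def cssDiff {E U : Type*} (s t : CSS E U) : CSS E U :=
  cssInter s (cssCompl t)

/-- The central soft information order: `s ⊑ t` iff `s ⊔ t = t`. -/
def cssLE {E U : Type*} (s t : CSS E U) : Prop := cssUnion s t = t

/-- Projection of a central soft set over a set `B` of parameters
(the mapping is unchanged, the central set becomes `B`). -/
def cssProj {E U : Type*} (s : CSS E U) (B : Set E) : CSS E U where
  f := s.f
  A := B

/-- Supremum of a family of central soft sets. -/
noncomputable def cssSup {E U ι : Type*} (F : ι → CSS E U) : CSS E U where
  f := fun e =>
    if {i : ι | e ∈ (F i).A}.Nonempty then ⋃ i ∈ {i : ι | e ∈ (F i).A}, (F i).f e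
    else ⋃ i, (F i).f e
  A := ⋃ i, (F i).A

theorem stmt2 {E U : Type*} (f g : E → Set U) (A B : Set E) :
    cssLE (⟨f, A⟩ : CSS E U) ⟨g, B⟩ ↔ (A ⊆ B ∧ ∀ e, e ∉ B \ A → f e ⊆ g e) := by
  constructor
  · rintro h
    have hA : A ∪ B = B := congrArg CSS.A h
    have hAB : A ⊆ B := by
      intro e he
      have : e ∈ A ∪ B := Or.inl he
      rwa [hA] at this
    refine ⟨hAB, fun e he => ?_⟩
    have hf := congrFun (congrArg CSS.f h) e
    simp only [cssUnion] at hf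
    have h1 : e ∉ A \ B := fun ⟨h1, h2⟩ => h2 (hAB h1)
    rw [if_neg h1, if_neg he] at hf
    intro x hx
    rw [← hf]; exact Or.inl hx
  · rintro ⟨hAB, hfg⟩
    unfold cssLE cssUnion
    congr 1
    · funext e
      by_cases h1 : e ∈ A \ B
      · exact absurd (hAB h1.1) h1.2
      rw [if_neg h1]
      by_cases h2 : e ∈ B \ A
      · rw [if_pos h2]
      · rw [if_neg h2]
        exact Set.union_eq_self_of_subset_left (hfg e h2)
    · exact Set.union_eq_self_of_subset_left hAB
end

section
/- For two central soft sets (f, A) and (g, B) over a common universe U, the central soft information order (f, A) ⊑ (g, B) holds if and only if (f, A) ⊓ (g, B) = (f, A). -/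
open Classical

theorem stmt3 {E U : Type*} (f g : E → Set U) (A B : Set E) :
    cssLE (⟨f, A⟩ : CSS E U) ⟨g, B⟩ ↔ cssInter (⟨f, A⟩ : CSS E U) ⟨g, B⟩ = ⟨f, A⟩ := by
  unfold cssLE cssUnion cssInter
  rw [CSS.mk.injEq, CSS.mk.injEq]
  constructor
  · rintro ⟨hf, hA⟩
    have hAB : A ⊆ B := Set.union_eq_right.mp hA
    refine ⟨funext fun e => ?_, Set.inter_eq_left.mpr hAB⟩
    have he := congrFun hf e
    by_cases h1 : e ∈ A \ B
    · exact (h1.2 (hAB h1.1)).elim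
    by_cases h2 : e ∈ B \ A
    · simp [h1, h2]
    · simp only [if_neg h1, if_neg h2] at he ⊢
      exact Set.inter_eq_left.mpr (Set.union_eq_right.mp he)
  · rintro ⟨hf, hA⟩
    have hAB : A ⊆ B := Set.inter_eq_left.mp hA
    refine ⟨funext fun e => ?_, Set.union_eq_right.mpr hAB⟩
    have he := congrFun hf e
    by_cases h1 : e ∈ A \ B
    · exact (h1.2 (hAB h1.1)).elim
    by_cases h2 : e ∈ B \ A
    · simp [h1, h2]
    · simp only [if_neg h1, if_neg h2] at he ⊢
      exact Set.union_eq_right.mpr (Set.inter_eq_left.mp he)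
end

section
/- For any two central soft sets (f, A) and (g, B) over a common universe U, the difference (f, A) − (g, B) is below (f, A) in the central soft information order: (f, A) − (g, B) ⊑ (f, A). -/
open Classical

theorem stmt6 {E U : Type*} (s t : CSS E U) :
    cssLE (cssDiff s t) s := by
  obtain ⟨fs, As⟩ := s
  obtain ⟨ft, At⟩ := t
  unfold cssLE cssUnion cssDiff cssInter cssCompl
  simp only [CSS.mk.injEq]
  constructor
  · funext e
    by_cases hs : e ∈ As <;> by_cases ht : e ∈ At <;>
      simp [hs, ht, Set.inter_union_distrib_right]
  · ext e
    simp only [Set.mem_union, Set.mem_inter_iff, Set.mem_compl_iff]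
    tauto
end

section
/- De Morgan law for intersection: for any two central soft sets (f, A) and (g, B) over a common universe U, [(f, A) ⊓ (g, B)]^c = (f, A)^c ⊔ (g, B)^c. -/
open Classical

theorem stmt7 {E U : Type*} (s t : CSS E U) :
    cssCompl (cssInter s t) = cssUnion (cssCompl s) (cssCompl t) := by
  simp only [cssCompl, cssInter, cssUnion, CSS.mk.injEq]
  constructor
  · funext e
    by_cases ha : e ∈ s.A <;> by_cases hb : e ∈ t.A <;>
      simp [ha, hb, Set.compl_inter, Set.compl_union]
  · simp [Set.compl_inter]
end

section
/- De Morgan law for union: for any two central soft sets (f, A) and (g, B) over a common universe U, [(f, A) ⊔ (g, B)]^c = (f, A)^c ⊓ (g, B)^c. -/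
open Classical

theorem stmt8 {E U : Type*} (s t : CSS E U) :
    cssCompl (cssUnion s t) = cssInter (cssCompl s) (cssCompl t) := by
  have hA : (cssCompl (cssUnion s t)).A = (cssInter (cssCompl s) (cssCompl t)).A := by
    simp [cssCompl, cssUnion, cssInter, Set.compl_union]
  have hf : (cssCompl (cssUnion s t)).f = (cssInter (cssCompl s) (cssCompl t)).f := by
    funext e
    simp only [cssCompl, cssUnion, cssInter, Set.mem_diff, Set.mem_compl_iff]
    by_cases hs : e ∈ s.A <;> by_cases ht : e ∈ t.A <;>
      simp [hs, ht, Set.compl_union, Set.compl_inter]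
  cases' h : cssCompl (cssUnion s t) with f A
  cases' h' : cssInter (cssCompl s) (cssCompl t) with g B
  simp_all
end

section
/- Intersection distributes over union for central soft sets: for central soft sets (f, A), (g, B), and (h, C) over a common universe U, (f, A) ⊓ [(g, B) ⊔ (h, C)] = [(f, A) ⊓ (g, B)] ⊔ [(f, A) ⊓ (h, C)]. -/
open Classical

theorem stmt11 {E U : Type*} (s t u : CSS E U) :
    cssInter s (cssUnion t u) = cssUnion (cssInter s t) (cssInter s u) := by
  simp only [cssInter, cssUnion, CSS.mk.injEq]
  constructor
  · funext e
    simp only [Set.mem_diff, Set.mem_union, Set.mem_inter_iff]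
    by_cases hs : e ∈ s.A <;> by_cases ht : e ∈ t.A <;> by_cases hu : e ∈ u.A <;>
      simp [hs, ht, hu] <;> ext x <;> simp <;> tauto
  · ext e; simp; tauto
end

section
/- Union distributes over intersection for central soft sets: for central soft sets (f, A), (g, B), and (h, C) over a common universe U, (f, A) ⊔ [(g, B) ⊓ (h, C)] = [(f, A) ⊔ (g, B)] ⊓ [(f, A) ⊔ (h, C)]. -/
open Classical

theorem stmt12 {E U : Type*} (s t u : CSS E U) :
    cssUnion s (cssInter t u) = cssInter (cssUnion s t) (cssUnion s u) := by
  simp only [cssUnion, cssInter, CSS.mk.injEq]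
  constructor
  · funext e
    by_cases hs : e ∈ s.A <;> by_cases ht : e ∈ t.A <;> by_cases hu : e ∈ u.A <;>
      simp [hs, ht, hu, Set.union_inter_distrib_left]
  · exact Set.union_inter_distrib_left _ _ _
end

section
/- Let {(f_i, A_i) : i ∈ I} be a family of central soft sets over a common universe U. Define h : E → P(U) by h(e) = ⋃_{i ∈ I_e} f_i(e) if I_e ≠ ∅ and h(e) = ⋃_{i ∈ I} f_i(e) otherwise, where I_e = {i ∈ I : e ∈ A_i}. Then (h, ⋃_{i ∈ I} A_i) is an upper bound of the family in the central soft information order: (f_j, A_j) ⊑ (h, ⋃_{i ∈ I} A_i) for every j ∈ I. -/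
open Classical

theorem stmt14 {E U ι : Type*} (F : ι → CSS E U) (j : ι) :
    cssLE (F j) (cssSup F) := by
  unfold cssLE cssUnion cssSup
  simp only [CSS.mk.injEq]
  constructor
  · funext e
    by_cases hA : e ∈ (F j).A
    · have hne : {i : ι | e ∈ (F i).A}.Nonempty := ⟨j, hA⟩
      have hUn : e ∈ ⋃ i, (F i).A := Set.mem_iUnion.2 ⟨j, hA⟩
      simp only [Set.mem_diff, hA, hUn, hne, not_true, and_false, if_false, if_true]
      apply Set.union_eq_self_of_subset_left
      exact Set.subset_biUnion_of_mem (u := fun i => (F i).f e) (show j ∈ {i : ι | e ∈ (F i).A} from hA)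
    · by_cases hUn : e ∈ ⋃ i, (F i).A
      · simp [Set.mem_diff, hA, hUn]
      · have hemp : ¬ {i : ι | e ∈ (F i).A}.Nonempty := by
          rintro ⟨i, hi⟩; exact hUn (Set.mem_iUnion.2 ⟨i, hi⟩)
        simp only [Set.mem_diff, hA, hUn, hemp, false_and, and_false, if_false,
          if_neg, not_false_iff]
        exact Set.union_eq_self_of_subset_left (Set.subset_iUnion (fun i => (F i).f e) j)
  · exact Set.union_eq_self_of_subset_left (Set.subset_iUnion (fun i => (F i).A) j)
end

section
/- Let {(f_i, A_i) : i ∈ I} be a family of central soft sets over a common universe U. Define h : E → P(U) by h(e) = ⋃_{i ∈ I_e} f_i(e) if I_e ≠ ∅ and h(e) = ⋃_{i ∈ I} f_i(e) otherwise, where I_e = {i ∈ I : e ∈ A_i}. If (g, B) is any central soft set with (f_j, A_j) ⊑ (g, B) for every j ∈ I, then (h, ⋃_{i ∈ I} A_i) ⊑ (g, B); hence (h, ⋃_{i ∈ I} A_i) is the least upper bound of the family in the central soft information order. -/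
open Classical

lemma CSS.ext' {E U : Type*} {s t : CSS E U} (hf : s.f = t.f) (hA : s.A = t.A) : s = t := by
  cases s; cases t; simp_all

theorem stmt15 {E U ι : Type*} (F : ι → CSS E U) (g : CSS E U)
    (hub : ∀ j : ι, cssLE (F j) g) : cssLE (cssSup F) g := by
  have hA : ∀ j, (F j).A ⊆ g.A := by
    intro j
    have h := congrArg CSS.A (hub j)
    simp only [cssUnion] at h
    intro e he
    rw [← h]; exact Or.inl he
  have hf : ∀ j e, (e ∈ (F j).A ∨ e ∉ g.A) → (F j).f e ⊆ g.f e := by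
    intro j e he
    have h1 := congrFun (congrArg CSS.f (hub j)) e
    simp only [cssUnion] at h1
    have hnot1 : e ∉ (F j).A \ g.A := fun h => h.2 (hA j h.1)
    have hnot2 : e ∉ g.A \ (F j).A := by
      rcases he with h | h
      · exact fun hh => hh.2 h
      · exact fun hh => h hh.1
    rw [if_neg hnot1, if_neg hnot2] at h1
    rw [← h1]; exact Set.subset_union_left
  have hSA : (cssSup F).A ⊆ g.A := by
    simp only [cssSup, Set.iUnion_subset_iff]
    exact hA
  apply CSS.ext'
  · funext e
    simp only [cssUnion]
    have hnot1 : e ∉ (cssSup F).A \ g.A := fun h => h.2 (hSA h.1)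
    rw [if_neg hnot1]
    by_cases h2 : e ∈ g.A \ (cssSup F).A
    · rw [if_pos h2]
    · rw [if_neg h2]
      apply Set.union_eq_self_of_subset_left
      simp only [cssSup]
      by_cases hne : {i : ι | e ∈ (F i).A}.Nonempty
      · rw [if_pos hne]
        refine Set.iUnion₂_subset fun i hi => hf i e (Or.inl hi)
      · rw [if_neg hne]
        have heg : e ∉ g.A := by
          intro hg
          apply h2
          refine ⟨hg, ?_⟩
          intro hs
          simp only [cssSup, Set.mem_iUnion] at hs
          obtain ⟨i, hi⟩ := hs
          exact hne ⟨i, hi⟩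
        exact Set.iUnion_subset fun i => hf i e (Or.inr heg)
  · simp only [cssUnion]
    exact Set.union_eq_self_of_subset_left hSA
end

section
/- For two central soft sets (f, A) and (g, B) over a common universe U and any set of parameters S with S ⊆ A ∪ B, the projection of the union is below the union of the projections: [(f, A) ⊔ (g, B)]↓S ⊑ (f, A)↓(S ∩ A) ⊔ (g, B)↓(S ∩ B). -/
open Classical

theorem stmt17 {E U : Type*} (f g : E → Set U) (A B S : Set E) (hS : S ⊆ A ∪ B) :
    cssLE (cssProj (cssUnion (⟨f, A⟩ : CSS E U) ⟨g, B⟩) S)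
      (cssUnion (cssProj (⟨f, A⟩ : CSS E U) (S ∩ A)) (cssProj (⟨g, B⟩ : CSS E U) (S ∩ B))) := by
  have hS' : (S ∩ A) ∪ (S ∩ B) = S := by
    rw [← Set.inter_union_distrib_left]; exact Set.inter_eq_left.mpr hS
  unfold cssLE cssUnion cssProj
  simp only [CSS.mk.injEq]
  constructor
  · funext e
    by_cases hA : e ∈ A <;> by_cases hB : e ∈ B <;> by_cases hSe : e ∈ S <;>
      simp [hA, hB, hSe, Set.mem_diff]
  · simp [hS']
end

section
/- For two central soft sets (f, A) and (g, B) over a common universe U, if S = (A ∪ B) − D for some D ⊆ A ∩ B, then the projection of the union equals the union of the projections: [(f, A) ⊔ (g, B)]↓S = (f, A)↓(S ∩ A) ⊔ (g, B)↓(S ∩ B). -/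
open Classical

theorem stmt18 {E U : Type*} (f g : E → Set U) (A B S D : Set E)
    (hD : D ⊆ A ∩ B) (hS : S = (A ∪ B) \ D) :
    cssProj (cssUnion (⟨f, A⟩ : CSS E U) ⟨g, B⟩) S
      = cssUnion (cssProj (⟨f, A⟩ : CSS E U) (S ∩ A)) (cssProj (⟨g, B⟩ : CSS E U) (S ∩ B)) := by
  have hAB : ∀ e, e ∈ (S ∩ A) \ (S ∩ B) ↔ e ∈ A \ B := by
    intro e
    constructor
    · rintro ⟨⟨hs, ha⟩, h⟩
      exact ⟨ha, fun hb => h ⟨hs, hb⟩⟩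
    · rintro ⟨ha, hb⟩
      have hs : e ∈ S := by
        rw [hS]
        exact ⟨Or.inl ha, fun hd => hb (hD hd).2⟩
      exact ⟨⟨hs, ha⟩, fun h => hb h.2⟩
  have hBA : ∀ e, e ∈ (S ∩ B) \ (S ∩ A) ↔ e ∈ B \ A := by
    intro e
    constructor
    · rintro ⟨⟨hs, hb⟩, h⟩
      exact ⟨hb, fun ha => h ⟨hs, ha⟩⟩
    · rintro ⟨hb, ha⟩
      have hs : e ∈ S := by
        rw [hS]
        exact ⟨Or.inr hb, fun hd => ha (hD hd).1⟩
      exact ⟨⟨hs, hb⟩, fun h => ha h.2⟩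
  have hA : S = (S ∩ A) ∪ (S ∩ B) := by
    rw [← Set.inter_union_distrib_left]
    rw [hS]; ext e; simp [Set.mem_diff]; tauto
  simp only [cssProj, cssUnion, CSS.mk.injEq]
  refine ⟨?_, hA⟩
  funext e
  simp only [hAB e, hBA e]
end

section
/- For two central soft sets (f, A) and (g, B) over a common universe U and any set of parameters S with S ⊆ A ∩ B, the intersection of the projections is below the projection of the intersection: (f, A)↓S ⊓ (g, B)↓S ⊑ [(f, A) ⊓ (g, B)]↓S. -/
open Classical

theorem stmt19 {E U : Type*} (f g : E → Set U) (A B S : Set E) (hS : S ⊆ A ∩ B) :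
    cssLE (cssInter (cssProj (⟨f, A⟩ : CSS E U) S) (cssProj (⟨g, B⟩ : CSS E U) S))
      (cssProj (cssInter (⟨f, A⟩ : CSS E U) ⟨g, B⟩) S) := by
  unfold cssLE cssUnion cssInter cssProj
  simp only [CSS.mk.injEq]
  constructor
  · funext e
    simp only [Set.mem_diff, Set.diff_self, Set.mem_empty_iff_false, false_and, if_false,
      and_not_self, if_false, Set.union_self]
    split_ifs with h1 h2 <;> simp_all <;> (ext x; tauto)
  · rw [Set.inter_self, Set.union_self]
end
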